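/- Let K = 2^m for a natural number m ≥ 1. Then: (i) there exist constants C > 0 and δ > 0 such that for every a ∈ ℝ^{K−1} with a_i > 0 for all i and ‖a‖₁ ≤ δ, and every index i, |a_i b_i(a)/D(a) − a_i(1 − a_i)| ≤ C·‖a‖₁³; that is, to linear order in ‖a‖₁ the reduced cross-entropy dynamics decouple into da_i/dt = a_i(1 − a_i) + O(‖a‖₁³). (ii) For any a₀ ∈ (0, 1), the function a(t) = a₀ / (a₀ + (1 − a₀)e^{−t}) solves the logistic equation a' = a(1 − a) with a(0) = a₀. -/

import Mathlib

open Matrix Finset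

noncomputable section

/-- The Sylvester Hadamard matrix `Φ_{2^m}`, defined recursively by `Φ₁ = (1)` and
`Φ_{2^{m+1}} = [[Φ_{2^m}, Φ_{2^m}], [Φ_{2^m}, -Φ_{2^m}]]`. -/
def sylvester : (m : ℕ) → Matrix (Fin (2 ^ m)) (Fin (2 ^ m)) ℝ
  | 0 => Matrix.of fun _ _ => 1
  | m + 1 => Matrix.of fun i j =>
      (if 2 ^ m ≤ i.val ∧ 2 ^ m ≤ j.val then -1 else 1) *
        sylvester m ⟨i.val % 2 ^ m, Nat.mod_lt _ (Nat.two_pow_pos m)⟩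
          ⟨j.val % 2 ^ m, Nat.mod_lt _ (Nat.two_pow_pos m)⟩

/-- The core `X = Φ[2:K, 2:K]` obtained by deleting the first row and column of `Φ`. -/
def hadCore (m : ℕ) : Matrix (Fin (2 ^ m - 1)) (Fin (2 ^ m - 1)) ℝ :=
  Matrix.of fun i j =>
    sylvester m ⟨i.val + 1, by have h1 := Nat.two_pow_pos m; have h2 := i.isLt; omega⟩
      ⟨j.val + 1, by have h1 := Nat.two_pow_pos m; have h2 := j.isLt; omega⟩

/-- `Ψ = 1 1ᵀ − X`. -/
def PsiM (m : ℕ) : Matrix (Fin (2 ^ m - 1)) (Fin (2 ^ m - 1)) ℝ :=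
  Matrix.of fun i j => 1 - hadCore m i j

/-- `b_i(a) = Σ_j Ψ_{ij} exp(−(Ψa)_j)`. -/
def bVec (m : ℕ) (a : Fin (2 ^ m - 1) → ℝ) (i : Fin (2 ^ m - 1)) : ℝ :=
  ∑ j, PsiM m i j * Real.exp (-((PsiM m).mulVec a j))

/-- `D(a) = 1 + Σ_j exp(−(Ψa)_j)`. -/
def Dden (m : ℕ) (a : Fin (2 ^ m - 1) → ℝ) : ℝ :=
  1 + ∑ j, Real.exp (-((PsiM m).mulVec a j))

/-- The energy `E(a) = log(1 + Σ_j exp(−(Ψa)_j))`. -/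
def energyE (m : ℕ) (a : Fin (2 ^ m - 1) → ℝ) : ℝ :=
  Real.log (1 + ∑ j, Real.exp (-((PsiM m).mulVec a j)))

/-- `b̄(a) = Σ_j â_j b_j(a)` with `â = a / ‖a‖₁`. -/
def bbar (m : ℕ) (a : Fin (2 ^ m - 1) → ℝ) : ℝ :=
  ∑ j, (a j / ∑ k, a k) * bVec m a j

/-- `M(a) = (1/2) Σ_i (â_i − 1/(K−1))²`. -/
def Mmetric (m : ℕ) (a : Fin (2 ^ m - 1) → ℝ) : ℝ :=
  (1 / 2) * ∑ i, (a i / (∑ k, a k) - 1 / ((2 : ℝ) ^ m - 1)) ^ 2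

lemma two_pow_succ' (m : ℕ) : (2:ℕ)^(m+1) = 2^m + 2^m := by ring

lemma fin_sum_dite (n : ℕ) (g : Fin n → ℝ) :
    ∑ k, g k = ∑ k ∈ range n, (if hk : k < n then g ⟨k, hk⟩ else 0) := by
  rw [← Fin.sum_univ_eq_sum_range]
  exact Finset.sum_congr rfl fun k _ => by simp [k.isLt]

lemma sum_split (m : ℕ) (f : Fin (2 ^ (m+1)) → ℝ) :
    ∑ k, f k = (∑ k : Fin (2 ^ m), f ⟨k.val, by have h := two_pow_succ' m; have := k.isLt; omega⟩)
      + ∑ k : Fin (2 ^ m), f ⟨2^m + k.val, by have h := two_pow_succ' m; have := k.isLt; omega⟩ := by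
  have h : (2:ℕ)^(m+1) = 2^m + 2^m := by ring
  set F : ℕ → ℝ := fun k => if hk : k < 2^(m+1) then f ⟨k, hk⟩ else 0 with hF
  have h1 : ∑ k, f k = ∑ k ∈ range (2^(m+1)), F k := fin_sum_dite _ f
  have h2 : ∑ k ∈ range (2^(m+1)), F k
      = (∑ k ∈ range (2^m), F k) + ∑ k ∈ range (2^m), F (2^m + k) := by
    rw [h]; exact Finset.sum_range_add F _ _
  rw [h1, h2]
  congr 1
  · rw [fin_sum_dite _ (fun k : Fin (2^m) => f ⟨k.val, _⟩)]
    refine Finset.sum_congr rfl fun k hk => ?_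
    simp only [Finset.mem_range] at hk
    have h2m : k < 2^(m+1) := by omega
    simp only [hF, dif_pos h2m, dif_pos hk]
  · rw [fin_sum_dite _ (fun k : Fin (2^m) => f ⟨2^m + k.val, _⟩)]
    refine Finset.sum_congr rfl fun k hk => ?_
    simp only [Finset.mem_range] at hk
    have h2m : 2^m + k < 2^(m+1) := by omega
    simp only [hF, dif_pos h2m, dif_pos hk]

lemma sylvester_succ (m : ℕ) (i j : Fin (2^(m+1))) :
    sylvester (m+1) i j = (if 2 ^ m ≤ i.val ∧ 2 ^ m ≤ j.val then -1 else 1) *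
      sylvester m ⟨i.val % 2 ^ m, Nat.mod_lt _ (Nat.two_pow_pos m)⟩
        ⟨j.val % 2 ^ m, Nat.mod_lt _ (Nat.two_pow_pos m)⟩ := rfl

lemma sylvester_pm (m : ℕ) : ∀ i j, sylvester m i j = 1 ∨ sylvester m i j = -1 := by
  induction m with
  | zero => intro i j; left; rfl
  | succ m ih =>
    intro i j
    rw [sylvester_succ]
    rcases ih ⟨i.val % 2^m, Nat.mod_lt _ (Nat.two_pow_pos m)⟩ ⟨j.val % 2^m, Nat.mod_lt _ (Nat.two_pow_pos m)⟩ with h | h <;>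
      rw [h] <;> by_cases hc : 2 ^ m ≤ i.val ∧ 2 ^ m ≤ j.val <;> simp [hc]

lemma sylvester_zero_left (m : ℕ) : ∀ j, sylvester m 0 j = 1 := by
  induction m with
  | zero => intro j; rfl
  | succ m ih =>
    intro j
    rw [sylvester_succ]
    have hcond : ¬ (2 ^ m ≤ (0 : Fin (2^(m+1))).val ∧ 2 ^ m ≤ j.val) := by
      rintro ⟨h1, -⟩
      have h0 : (0 : Fin (2^(m+1))).val = 0 := rfl
      have := Nat.two_pow_pos m; omega
    rw [if_neg hcond, one_mul]
    have e : (⟨(0 : Fin (2^(m+1))).val % 2^m, Nat.mod_lt _ (Nat.two_pow_pos m)⟩ : Fin (2^m)) = 0 := by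
      apply Fin.ext; simp [Fin.val_zero]
    rw [e]; exact ih _

lemma sylvester_symm (m : ℕ) : ∀ i j, sylvester m i j = sylvester m j i := by
  induction m with
  | zero => intro i j; rfl
  | succ m ih =>
    intro i j
    rw [sylvester_succ, sylvester_succ, ih]
    by_cases h1 : 2^m ≤ i.val <;> by_cases h2 : 2^m ≤ j.val <;> simp [h1, h2]

lemma sylvester_orth (m : ℕ) : ∀ i j : Fin (2^m),
    ∑ k, sylvester m i k * sylvester m j k = if i = j then ((2:ℝ)^m) else 0 := by
  induction m with
  | zero =>
    intro i j
    have h1 := i.isLt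
    have h2 := j.isLt
    norm_num at h1 h2
    have hij : i = j := Fin.ext (by omega)
    subst hij
    rw [if_pos rfl]
    have hone : ∀ k : Fin (2^0), sylvester 0 i k * sylvester 0 i k = 1 := fun k => by
      show (1:ℝ) * 1 = 1; ring
    rw [Finset.sum_congr rfl fun k _ => hone k]
    simp
  | succ m ih =>
    intro i j
    have hpos := Nat.two_pow_pos m
    have h2 : (2:ℕ)^(m+1) = 2^m + 2^m := by ring
    set i' : Fin (2^m) := ⟨i.val % 2^m, Nat.mod_lt _ (Nat.two_pow_pos m)⟩ with hi'
    set j' : Fin (2^m) := ⟨j.val % 2^m, Nat.mod_lt _ (Nat.two_pow_pos m)⟩ with hj'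
    set εi : ℝ := if 2^m ≤ i.val then -1 else 1 with hεi
    set εj : ℝ := if 2^m ≤ j.val then -1 else 1 with hεj
    have e1 : ∀ p : Fin (2^(m+1)), ∀ k : Fin (2^m), p.val = k.val →
        sylvester (m+1) i p = sylvester m i' k ∧ sylvester (m+1) j p = sylvester m j' k := by
      intro p k hpk
      constructor <;>
      · rw [sylvester_succ]
        rw [if_neg (by rw [hpk]; exact fun hc => absurd hc.2 (by have := k.isLt; omega)), one_mul]
        congr 1
        apply Fin.ext
        simp [hpk, Nat.mod_eq_of_lt k.isLt]
    have e2 : ∀ p : Fin (2^(m+1)), ∀ k : Fin (2^m), p.val = 2^m + k.val →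
        sylvester (m+1) i p = εi * sylvester m i' k ∧ sylvester (m+1) j p = εj * sylvester m j' k := by
      intro p k hpk
      have hidx : p.val % 2^m = k.val := by
        rw [hpk, Nat.add_mod_left, Nat.mod_eq_of_lt k.isLt]
      constructor <;>
      · rw [sylvester_succ]
        have e : (⟨p.val % 2^m, Nat.mod_lt _ (Nat.two_pow_pos m)⟩ : Fin (2^m)) = k :=
          Fin.ext hidx
        rw [e]
        have hp : 2^m ≤ p.val := by omega
        congr 1
        simp only [hεi, hεj, hp, and_true]
    rw [sum_split m (fun k => sylvester (m+1) i k * sylvester (m+1) j k)]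
    have s1 : (∑ k : Fin (2^m), sylvester (m+1) i ⟨k.val, by omega⟩ * sylvester (m+1) j ⟨k.val, by omega⟩)
        = if i' = j' then ((2:ℝ)^m) else 0 := by
      rw [← ih i' j']
      refine Finset.sum_congr rfl fun k _ => ?_
      obtain ⟨a, b⟩ := e1 ⟨k.val, by omega⟩ k rfl
      rw [a, b]
    have s2 : (∑ k : Fin (2^m), sylvester (m+1) i ⟨2^m + k.val, by omega⟩ * sylvester (m+1) j ⟨2^m + k.val, by omega⟩)
        = εi * εj * if i' = j' then ((2:ℝ)^m) else 0 := by
      rw [← ih i' j', Finset.mul_sum]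
      refine Finset.sum_congr rfl fun k _ => ?_
      obtain ⟨a, b⟩ := e2 ⟨2^m + k.val, by omega⟩ k rfl
      rw [a, b]; ring
    rw [s1, s2]
    have hmi : i.val % 2^m = if 2^m ≤ i.val then i.val - 2^m else i.val := by
      split_ifs with h
      · rw [Nat.mod_eq_sub_mod h, Nat.mod_eq_of_lt (by have := i.isLt; omega)]
      · exact Nat.mod_eq_of_lt (by omega)
    have hmj : j.val % 2^m = if 2^m ≤ j.val then j.val - 2^m else j.val := by
      split_ifs with h
      · rw [Nat.mod_eq_sub_mod h, Nat.mod_eq_of_lt (by have := j.isLt; omega)]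
      · exact Nat.mod_eq_of_lt (by omega)
    have hij : (i = j) ↔ (i' = j' ∧ ((2^m ≤ i.val) ↔ (2^m ≤ j.val))) := by
      constructor
      · rintro rfl; exact ⟨rfl, Iff.rfl⟩
      · rintro ⟨h1, hh2⟩
        have hv : i.val % 2^m = j.val % 2^m := congrArg Fin.val h1
        apply Fin.ext
        rcases le_or_gt (2^m) i.val with hi | hi <;> rcases le_or_gt (2^m) j.val with hj | hj <;>
          simp [hi, hj, Nat.not_le.mpr] at hmi hmj hh2 <;> omega
    have hvi : ∀ x y : Fin (2^m), x = y ↔ x.val = y.val := fun x y => Fin.ext_iff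
    rcases le_or_gt (2^m) i.val with hi2 | hi2 <;> rcases le_or_gt (2^m) j.val with hj2 | hj2
    · have he : εi * εj = 1 := by rw [hεi, hεj, if_pos hi2, if_pos hj2]; ring
      rw [he]
      by_cases hq : i' = j'
      · have hq2 : i = j := hij.mpr ⟨hq, iff_of_true hi2 hj2⟩
        rw [if_pos hq, if_pos hq2]; ring
      · have hq2 : i ≠ j := fun h => hq (hij.mp h).1
        rw [if_neg hq, if_neg hq2]; ring
    · have he : εi * εj = -1 := by rw [hεi, hεj, if_pos hi2, if_neg (Nat.not_le.mpr hj2)]; ring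
      rw [he]
      have hq2 : i ≠ j := fun h => by
        have := ((hij.mp h).2).mp hi2; omega
      rw [if_neg hq2]
      by_cases hq : i' = j'
      · rw [if_pos hq]; ring
      · rw [if_neg hq]; ring
    · have he : εi * εj = -1 := by rw [hεi, hεj, if_neg (Nat.not_le.mpr hi2), if_pos hj2]; ring
      rw [he]
      have hq2 : i ≠ j := fun h => by
        have := ((hij.mp h).2).mpr hj2; omega
      rw [if_neg hq2]
      by_cases hq : i' = j'
      · rw [if_pos hq]; ring
      · rw [if_neg hq]; ring
    · have he : εi * εj = 1 := by
        rw [hεi, hεj, if_neg (Nat.not_le.mpr hi2), if_neg (Nat.not_le.mpr hj2)]; ring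
      rw [he]
      by_cases hq : i' = j'
      · have hq2 : i = j := hij.mpr ⟨hq, iff_of_false (by omega) (by omega)⟩
        rw [if_pos hq, if_pos hq2]; ring
      · have hq2 : i ≠ j := fun h => hq (hij.mp h).1
        rw [if_neg hq, if_neg hq2]; ring

lemma sylvester_row_sum (m : ℕ) (i : Fin (2^m)) :
    ∑ k, sylvester m i k = if i = 0 then ((2:ℝ)^m) else 0 := by
  rw [← sylvester_orth m i 0]
  exact Finset.sum_congr rfl fun k _ => by
    rw [sylvester_zero_left m k, mul_one]

lemma sum_tail (m : ℕ) (hm : 1 ≤ m) (g : Fin (2^m) → ℝ) :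
    ∑ k, g k = g 0 + ∑ j : Fin (2^m - 1), g ⟨j.val + 1, by have := Nat.two_pow_pos m; have := j.isLt; omega⟩ := by
  have hpos := Nat.two_pow_pos m
  set F : ℕ → ℝ := fun k => if hk : k < 2^m then g ⟨k, hk⟩ else 0 with hF
  have h1 : ∑ k, g k = ∑ k ∈ range (2^m), F k := fin_sum_dite _ g
  have h2 : ∑ k ∈ range (2^m), F k = F 0 + ∑ k ∈ range (2^m - 1), F (k + 1) := by
    have hn : range ((2:ℕ)^m) = range ((2^m - 1) + 1) := by congr 1; omega
    rw [hn, Finset.sum_range_succ']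
    exact add_comm _ _
  rw [h1, h2]
  congr 1
  · simp only [hF, dif_pos hpos]
    congr 1
  · rw [fin_sum_dite _ (fun j : Fin (2^m - 1) => g ⟨j.val + 1, _⟩)]
    refine Finset.sum_congr rfl fun k hk => ?_
    simp only [Finset.mem_range] at hk
    have h3 : k + 1 < 2^m := by omega
    simp only [hF, dif_pos h3, dif_pos hk]

section Psi
variable (m : ℕ)

lemma psi_entry (i j : Fin (2^m - 1)) :
    PsiM m i j = 1 - sylvester m ⟨i.val + 1, by have := Nat.two_pow_pos m; have := i.isLt; omega⟩
      ⟨j.val + 1, by have := Nat.two_pow_pos m; have := j.isLt; omega⟩ := rfl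

lemma psi_nonneg (i j : Fin (2^m - 1)) : 0 ≤ PsiM m i j := by
  rw [psi_entry]
  rcases sylvester_pm m ⟨i.val + 1, by have := Nat.two_pow_pos m; have := i.isLt; omega⟩
    ⟨j.val + 1, by have := Nat.two_pow_pos m; have := j.isLt; omega⟩ with h | h <;> rw [h] <;> norm_num

lemma psi_le_two (i j : Fin (2^m - 1)) : PsiM m i j ≤ 2 := by
  rw [psi_entry]
  rcases sylvester_pm m ⟨i.val + 1, by have := Nat.two_pow_pos m; have := i.isLt; omega⟩
    ⟨j.val + 1, by have := Nat.two_pow_pos m; have := j.isLt; omega⟩ with h | h <;> rw [h] <;> norm_num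

lemma psi_symm (i j : Fin (2^m - 1)) : PsiM m i j = PsiM m j i := by
  rw [psi_entry, psi_entry, sylvester_symm]

lemma psi_row_sum (hm : 1 ≤ m) (i : Fin (2^m - 1)) : ∑ j, PsiM m i j = (2:ℝ)^m := by
  have hpos := Nat.two_pow_pos m
  set ip : Fin (2^m) := ⟨i.val + 1, by have := i.isLt; omega⟩ with hip
  have hip0 : ip ≠ 0 := by
    intro h
    have := congrArg Fin.val h
    simp [hip] at this
  have htail := sum_tail m hm (fun k => sylvester m ip k)
  rw [sylvester_row_sum, if_neg hip0] at htail
  have hcol0 : sylvester m ip 0 = 1 := by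
    rw [sylvester_symm, sylvester_zero_left]
  rw [hcol0] at htail
  have hre : ∑ j, PsiM m i j
      = ∑ j : Fin (2^m - 1), (1 - sylvester m ip ⟨j.val + 1, by have := j.isLt; omega⟩) :=
    Finset.sum_congr rfl fun j _ => psi_entry m i j
  rw [hre, Finset.sum_sub_distrib, Finset.sum_const, Finset.card_univ]
  simp only [Fintype.card_fin, nsmul_eq_mul, mul_one]
  have hc : ((2^m - 1 : ℕ) : ℝ) = 2^m - 1 := by
    push_cast [Nat.cast_sub (by omega : 1 ≤ 2^m)]; norm_num
  rw [hc]
  have : ∑ j : Fin (2^m - 1), sylvester m ip ⟨j.val + 1, by have := j.isLt; omega⟩ = -1 := by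
    linarith [htail]
  rw [this]; ring

set_option maxHeartbeats 2000000 in
lemma psi_sq (hm : 1 ≤ m) (i j : Fin (2^m - 1)) :
    ∑ k, PsiM m i k * PsiM m k j = (2:ℝ)^m * (1 + if i = j then 1 else 0) := by
  have hpos := Nat.two_pow_pos m
  set ip : Fin (2^m) := ⟨i.val + 1, by have := i.isLt; omega⟩ with hip
  set jp : Fin (2^m) := ⟨j.val + 1, by have := j.isLt; omega⟩ with hjp
  have hip0 : ip ≠ 0 := fun h => by have := congrArg Fin.val h; simp [hip] at this
  have hjp0 : jp ≠ 0 := fun h => by have := congrArg Fin.val h; simp [hjp] at this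
  set A : Fin (2^m - 1) → ℝ := fun k => sylvester m ip ⟨k.val + 1, by have := k.isLt; omega⟩ with hA
  set B : Fin (2^m - 1) → ℝ := fun k => sylvester m jp ⟨k.val + 1, by have := k.isLt; omega⟩ with hB
  have expand : ∀ k : Fin (2^m - 1), PsiM m i k * PsiM m k j = 1 - A k - B k + A k * B k := by
    intro k
    have h1 : PsiM m i k = 1 - A k := psi_entry m i k
    have h2 : PsiM m k j = 1 - B k := by
      rw [psi_entry, hB]
      congr 1
      exact sylvester_symm m _ _
    rw [h1, h2]; ring
  rw [Finset.sum_congr rfl fun k _ => expand k]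
  have t1 : ∑ k, A k = -1 := by
    have htail := sum_tail m hm (fun k => sylvester m ip k)
    rw [sylvester_row_sum, if_neg hip0, sylvester_symm, sylvester_zero_left] at htail
    have : ∑ k, A k = 0 - 1 := by rw [hA]; linarith [htail]
    linarith [this]
  have t2 : ∑ k, B k = -1 := by
    have htail := sum_tail m hm (fun k => sylvester m jp k)
    rw [sylvester_row_sum, if_neg hjp0, sylvester_symm, sylvester_zero_left] at htail
    have : ∑ k, B k = 0 - 1 := by rw [hB]; linarith [htail]
    linarith [this]
  have t3 : ∑ k, A k * B k = (if i = j then (2:ℝ)^m else 0) - 1 := by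
    have htail : (if ip = jp then (2:ℝ)^m else 0)
        = sylvester m ip 0 * sylvester m jp 0 + ∑ k, A k * B k := by
      have h := sum_tail m hm (fun k => sylvester m ip k * sylvester m jp k)
      rw [sylvester_orth] at h
      exact h
    have h0 : sylvester m ip 0 * sylvester m jp 0 = 1 := by
      rw [sylvester_symm m ip 0, sylvester_symm m jp 0, sylvester_zero_left, sylvester_zero_left]
      norm_num
    rw [h0] at htail
    by_cases hq : i = j
    · have hpq : ip = jp := by rw [hip, hjp]; exact Fin.ext (by simp [hq])
      rw [if_pos hpq] at htail
      rw [if_pos hq]; linarith [htail]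
    · have hpq : ip ≠ jp := by
        intro h'
        have hv := congrArg Fin.val h'
        simp only [hip, hjp] at hv
        exact hq (Fin.ext (by omega))
      rw [if_neg hpq] at htail
      rw [if_neg hq]; linarith [htail]
  rw [Finset.sum_add_distrib, Finset.sum_sub_distrib, Finset.sum_sub_distrib, t1, t2, t3,
    Finset.sum_const, Finset.card_univ]
  simp only [Fintype.card_fin, nsmul_eq_mul, mul_one]
  have hc : ((2^m - 1 : ℕ) : ℝ) = 2^m - 1 := by
    push_cast [Nat.cast_sub (by omega : 1 ≤ 2^m)]; norm_num
  rw [hc]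
  by_cases hq : i = j <;> simp [hq] <;> ring

end Psi

theorem main_part1 (m : ℕ) (hm : 1 ≤ m) :
    ∃ C > (0 : ℝ), ∃ δ > (0 : ℝ),
      ∀ a : Fin (2 ^ m - 1) → ℝ, (∀ i, 0 < a i) → (∑ i, a i) ≤ δ →
        ∀ i, |a i * bVec m a i / Dden m a - a i * (1 - a i)| ≤ C * (∑ i, a i) ^ 3 := by
  have hKpos : (0:ℝ) < 2^m := by positivity
  have hcard : ((2^m - 1 : ℕ) : ℝ) = 2^m - 1 := by
    have : (1:ℕ) ≤ 2^m := Nat.one_le_two_pow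
    push_cast [Nat.cast_sub this]; norm_num
  refine ⟨13 * 2^m, by positivity, 1/2, by norm_num, fun a hpos hs i => ?_⟩
  set s := ∑ i, a i with hsdef
  have hs0 : 0 ≤ s := Finset.sum_nonneg fun j _ => (hpos j).le
  have hai_le : ∀ i, a i ≤ s := fun i =>
    Finset.single_le_sum (fun j _ => (hpos j).le) (Finset.mem_univ i)
  have hai0 : 0 < a i := hpos i
  set y : Fin (2^m - 1) → ℝ := fun j => (PsiM m).mulVec a j with hy
  have hy0 : ∀ j, 0 ≤ y j := by
    intro j
    simp only [hy, Matrix.mulVec, dotProduct]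
    exact Finset.sum_nonneg fun k _ => mul_nonneg (psi_nonneg m j k) (hpos k).le
  have hy2 : ∀ j, y j ≤ 2 * s := by
    intro j
    have : ∀ k, PsiM m j k * a k ≤ 2 * a k := fun k =>
      mul_le_mul_of_nonneg_right (psi_le_two m j k) (hpos k).le
    have h2 : y j = ∑ k, PsiM m j k * a k := by
      simp only [hy, Matrix.mulVec, dotProduct]
    rw [h2]
    calc ∑ k, PsiM m j k * a k ≤ ∑ k, 2 * a k := Finset.sum_le_sum fun k _ => this k
    _ = 2 * s := by rw [← Finset.mul_sum]
  set r : Fin (2^m - 1) → ℝ := fun j => Real.exp (-(y j)) - 1 + y j with hr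
  have hrbound : ∀ j, |r j| ≤ 4 * s^2 := by
    intro j
    have h1 : |(-(y j))| ≤ 1 := by
      rw [abs_neg, abs_of_nonneg (hy0 j)]
      linarith [hy2 j]
    have h2 := Real.abs_exp_sub_one_sub_id_le h1
    have h3 : Real.exp (-(y j)) - 1 - (-(y j)) = r j := by rw [hr]; ring
    rw [h3] at h2
    have h4 : (-(y j))^2 = (y j)^2 := by ring
    rw [h4] at h2
    have h5 : (y j)^2 ≤ (2*s)^2 := by
      apply sq_le_sq' <;> [linarith [hy0 j]; exact hy2 j]
    calc |r j| ≤ (y j)^2 := h2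
    _ ≤ (2*s)^2 := h5
    _ = 4 * s^2 := by ring
  -- sum of y
  have sumY : ∑ j, y j = 2^m * s := by
    have : ∑ j, y j = ∑ k, (∑ j, PsiM m j k) * a k := by
      rw [hy]
      simp only [Matrix.mulVec, dotProduct]
      rw [Finset.sum_comm]
      exact Finset.sum_congr rfl fun k _ => by rw [Finset.sum_mul]
    rw [this]
    have hcol : ∀ k, ∑ j, PsiM m j k = (2:ℝ)^m := by
      intro k
      rw [Finset.sum_congr rfl fun j _ => psi_symm m j k]
      exact psi_row_sum m hm k
    rw [Finset.sum_congr rfl fun k _ => by rw [hcol k], ← Finset.mul_sum]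
  -- sum of Psi i j * y j
  have sumPsiY : ∑ j, PsiM m i j * y j = 2^m * (s + a i) := by
    have h1 : ∑ j, PsiM m i j * y j = ∑ k, (∑ j, PsiM m i j * PsiM m j k) * a k := by
      rw [hy]
      simp only [Matrix.mulVec, dotProduct]
      rw [Finset.sum_congr rfl fun j (_ : j ∈ univ) => Finset.mul_sum _ _ _]
      rw [Finset.sum_comm]
      exact Finset.sum_congr rfl fun k _ => by
        rw [Finset.sum_mul]
        exact Finset.sum_congr rfl fun j _ => by ring
    rw [h1]
    have h2 : ∀ k, (∑ j, PsiM m i j * PsiM m j k) * a k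
        = 2^m * a k + (if i = k then (2:ℝ)^m else 0) * a k := by
      intro k
      rw [psi_sq m hm i k]
      by_cases hq : i = k <;> simp [hq] <;> ring
    rw [Finset.sum_congr rfl fun k _ => h2 k, Finset.sum_add_distrib, ← Finset.mul_sum]
    have h3 : ∑ k, (if i = k then (2:ℝ)^m else 0) * a k = 2^m * a i := by
      rw [Finset.sum_eq_single i]
      · simp
      · intro b _ hb; rw [if_neg (Ne.symm hb), zero_mul]
      · intro hb; exact absurd (Finset.mem_univ i) hb
    rw [h3]; ring
  -- Psi row sum for i
  have rowi : ∑ j, PsiM m i j = (2:ℝ)^m := psi_row_sum m hm i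
  -- expansion of D
  set RD := ∑ j, r j with hRD
  have hRDb : |RD| ≤ 2^m * (4 * s^2) := by
    calc |RD| ≤ ∑ j, |r j| := Finset.abs_sum_le_sum_abs _ _
    _ ≤ ∑ _j : Fin (2^m - 1), 4 * s^2 := Finset.sum_le_sum fun j _ => hrbound j
    _ = ((2^m - 1 : ℕ) : ℝ) * (4 * s^2) := by
        rw [Finset.sum_const, Finset.card_univ]; simp
    _ ≤ 2^m * (4 * s^2) := by
        apply mul_le_mul_of_nonneg_right _ (by positivity)
        rw [hcard]; linarith
  have hDexp : Dden m a = 2^m * (1 - s) + RD := by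
    rw [Dden, hRD]
    have : ∀ j, Real.exp (-((PsiM m).mulVec a j)) = 1 - y j + r j := fun j => by
      rw [hr, hy]; ring
    rw [Finset.sum_congr rfl fun j _ => this j]
    rw [Finset.sum_add_distrib, Finset.sum_sub_distrib, sumY, Finset.sum_const, Finset.card_univ]
    simp only [Fintype.card_fin, nsmul_eq_mul, mul_one]
    rw [hcard]; ring
  -- expansion of b
  set Rb := ∑ j, PsiM m i j * r j with hRb
  have hRbb : |Rb| ≤ 2^m * (8 * s^2) := by
    calc |Rb| ≤ ∑ j, |PsiM m i j * r j| := Finset.abs_sum_le_sum_abs _ _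
    _ ≤ ∑ _j : Fin (2^m - 1), 2 * (4 * s^2) := by
        apply Finset.sum_le_sum
        intro j _
        rw [abs_mul, abs_of_nonneg (psi_nonneg m i j)]
        exact mul_le_mul (psi_le_two m i j) (hrbound j) (abs_nonneg _) (by norm_num)
    _ = ((2^m - 1 : ℕ) : ℝ) * (2 * (4 * s^2)) := by
        rw [Finset.sum_const, Finset.card_univ]; simp
    _ ≤ 2^m * (8 * s^2) := by
        have : ((2^m - 1 : ℕ) : ℝ) ≤ 2^m := by rw [hcard]; linarith
        nlinarith [sq_nonneg s]
  have hbexp : bVec m a i = 2^m * (1 - s - a i) + Rb := by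
    rw [bVec, hRb]
    have : ∀ j, PsiM m i j * Real.exp (-((PsiM m).mulVec a j))
        = PsiM m i j - PsiM m i j * y j + PsiM m i j * r j := fun j => by
      have he : Real.exp (-((PsiM m).mulVec a j)) = 1 - y j + r j := by rw [hr, hy]; ring
      rw [he]; ring
    rw [Finset.sum_congr rfl fun j _ => this j]
    rw [Finset.sum_add_distrib, Finset.sum_sub_distrib, sumPsiY, rowi]
    ring
  -- D ≥ 1
  have hD1 : 1 ≤ Dden m a := by
    rw [Dden]
    have : 0 ≤ ∑ j, Real.exp (-((PsiM m).mulVec a j)) :=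
      Finset.sum_nonneg fun j _ => (Real.exp_pos _).le
    linarith
  have hDne : Dden m a ≠ 0 := by linarith
  -- key difference
  have hkey : bVec m a i - (1 - a i) * Dden m a = -(2^m * a i * s) + Rb - (1 - a i) * RD := by
    rw [hbexp, hDexp]; ring
  have hkeyb : |bVec m a i - (1 - a i) * Dden m a| ≤ 13 * 2^m * s^2 := by
    rw [hkey]
    have h1ai : |1 - a i| ≤ 1 := by
      rw [abs_of_nonneg (by linarith [hai_le i])]
      linarith [hai0]
    calc |(-(2^m * a i * s) + Rb - (1 - a i) * RD)|
        ≤ |(-(2^m * a i * s))| + |Rb| + |(1 - a i) * RD| := by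
          have := abs_add_le (-(2^m * a i * s) + Rb) (-((1 - a i) * RD))
          have h2 := abs_add_le (-(2^m * a i * s)) Rb
          rw [abs_neg] at this
          calc |(-(2^m * a i * s) + Rb - (1 - a i) * RD)|
              = |(-(2^m * a i * s) + Rb) + (-((1 - a i) * RD))| := by ring_nf
          _ ≤ |(-(2^m * a i * s) + Rb)| + |(1 - a i) * RD| := this
          _ ≤ |(-(2^m * a i * s))| + |Rb| + |(1 - a i) * RD| := by linarith [h2]
    _ ≤ 2^m * s^2 + 2^m * (8 * s^2) + 2^m * (4 * s^2) := by
        have e1 : |(-(2^m * a i * s))| = 2^m * a i * s := by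
          rw [abs_neg, abs_of_nonneg (by positivity)]
        have e2 : 2^m * a i * s ≤ 2^m * s^2 := by
          have h := mul_le_mul_of_nonneg_left
            (mul_le_mul_of_nonneg_right (hai_le i) hs0) hKpos.le
          nlinarith [h]
        have e3 : |(1 - a i) * RD| ≤ 2^m * (4 * s^2) := by
          rw [abs_mul]
          calc |1 - a i| * |RD| ≤ 1 * (2^m * (4 * s^2)) :=
            mul_le_mul h1ai hRDb (abs_nonneg _) (by norm_num)
          _ = 2^m * (4 * s^2) := by ring
        rw [e1]
        linarith [hRbb, e2, e3]
    _ = 13 * 2^m * s^2 := by ring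
  -- final
  have hrewrite : a i * bVec m a i / Dden m a - a i * (1 - a i)
      = a i * (bVec m a i - (1 - a i) * Dden m a) / Dden m a := by
    field_simp
  rw [hrewrite, abs_div, abs_of_pos (by linarith : (0:ℝ) < Dden m a)]
  calc |a i * (bVec m a i - (1 - a i) * Dden m a)| / Dden m a
      ≤ |a i * (bVec m a i - (1 - a i) * Dden m a)| := div_le_self (abs_nonneg _) hD1
  _ = |a i| * |bVec m a i - (1 - a i) * Dden m a| := abs_mul _ _
  _ ≤ s * (13 * 2^m * s^2) := by
      apply mul_le_mul _ hkeyb (abs_nonneg _) hs0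
      rw [abs_of_pos hai0]; exact hai_le i
  _ = 13 * 2^m * s^3 := by ring

theorem main_part2 (a₀ : ℝ) (h0 : 0 < a₀) (h1 : a₀ < 1) :
    (∀ t : ℝ, HasDerivAt (fun s => a₀ / (a₀ + (1 - a₀) * Real.exp (-s)))
        ((a₀ / (a₀ + (1 - a₀) * Real.exp (-t))) *
          (1 - a₀ / (a₀ + (1 - a₀) * Real.exp (-t)))) t) ∧
      a₀ / (a₀ + (1 - a₀) * Real.exp (-(0 : ℝ))) = a₀ := by
  have hg : ∀ u : ℝ, 0 < a₀ + (1 - a₀) * Real.exp (-u) := fun u => by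
    have h2 := Real.exp_pos (-u)
    have h3 : Real.exp (-u) ≤ 1 ∨ 1 < Real.exp (-u) := le_or_gt _ _
    nlinarith
  constructor
  · intro t
    have hd : HasDerivAt (fun u : ℝ => a₀ + (1 - a₀) * Real.exp (-u))
        ((1 - a₀) * (Real.exp (-t) * (-1))) t := by
      have ha : HasDerivAt (fun u : ℝ => -u) (-1 : ℝ) t := (hasDerivAt_id t).neg
      have hb : HasDerivAt (fun u : ℝ => Real.exp (-u)) (Real.exp (-t) * (-1)) t := ha.exp
      exact (hb.const_mul (1 - a₀)).const_add a₀
    have hne : a₀ + (1 - a₀) * Real.exp (-t) ≠ 0 := (hg t).ne'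
    have hdiv := (hasDerivAt_const t a₀).div hd hne
    have heq : (a₀ / (a₀ + (1 - a₀) * Real.exp (-t))) * (1 - a₀ / (a₀ + (1 - a₀) * Real.exp (-t)))
        = (0 * (a₀ + (1 - a₀) * Real.exp (-t)) - a₀ * ((1 - a₀) * (Real.exp (-t) * -1))) /
          (a₀ + (1 - a₀) * Real.exp (-t)) ^ 2 := by
      have hg2 : (a₀ + (1 - a₀) * Real.exp (-t))^2 ≠ 0 := pow_ne_zero _ hne
      rw [eq_div_iff hg2]
      field_simp
      ring
    rw [heq]
    exact hdiv
  · rw [neg_zero, Real.exp_zero, mul_one]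
    have h2 : a₀ + (1 - a₀) = 1 := by ring
    rw [h2, div_one]

/-- linearized dynamics decouple into logistic equations.
(i) There are constants `C > 0`, `δ > 0` such that for every positive `a` with
`‖a‖₁ ≤ δ` and every `i`, `|a_i b_i(a)/D(a) − a_i(1 − a_i)| ≤ C‖a‖₁³`; i.e. to linear
order the reduced cross-entropy dynamics are `da_i/dt = a_i(1 − a_i) + O(‖a‖₁³)`.
(ii) For `a₀ ∈ (0,1)`, `a(t) = a₀/(a₀ + (1 − a₀)e^{−t})` solves the logistic equation
`a' = a(1 − a)` with `a(0) = a₀`. -/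
theorem linearized_dynamics_logistic (m : ℕ) (hm : 1 ≤ m) :
    (∃ C > (0 : ℝ), ∃ δ > (0 : ℝ),
      ∀ a : Fin (2 ^ m - 1) → ℝ, (∀ i, 0 < a i) → (∑ i, a i) ≤ δ →
        ∀ i, |a i * bVec m a i / Dden m a - a i * (1 - a i)| ≤ C * (∑ i, a i) ^ 3) ∧
    (∀ a₀ : ℝ, 0 < a₀ → a₀ < 1 →
      (∀ t : ℝ, HasDerivAt (fun s => a₀ / (a₀ + (1 - a₀) * Real.exp (-s)))
        ((a₀ / (a₀ + (1 - a₀) * Real.exp (-t))) *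
          (1 - a₀ / (a₀ + (1 - a₀) * Real.exp (-t)))) t) ∧
      a₀ / (a₀ + (1 - a₀) * Real.exp (-(0 : ℝ))) = a₀) := by
  exact ⟨main_part1 m hm, fun a₀ h0 h1 => main_part2 a₀ h0 h1⟩
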